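/- Let Γ := Cos(G,H,A) be a vertex-transitive coset graph of a finite group G, and let B be a subset of A. If every automorphism φ ∈ Aut(Γ) fixing the vertex H fixes the set {Hx : x ∈ B} pointwise, then every such φ fixes the set {Hx : x ∈ ⟨B⟩} pointwise. -/

import Mathlib

/-- A permutation `σ` of the vertex set is an automorphism of the simple graph `Γ`. -/
def IsGraphAut {V : Type*} (Γ : SimpleGraph V) (σ : Equiv.Perm V) : Prop :=
  ∀ u v : V, Γ.Adj (σ u) (σ v) ↔ Γ.Adj u v

/-- The right coset `Hx` as a subset of `G`. -/
def rightCoset' (G : Type*) [Group G] (H : Subgroup G) (x : G) : Set G :=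
  {g : G | g * x⁻¹ ∈ H}

/-- The vertex set of the coset graph: the right cosets of `H` in `G`. -/
def CosetVerts (G : Type*) [Group G] (H : Subgroup G) : Type _ :=
  {S : Set G // ∃ x : G, S = rightCoset' G H x}

/-- The vertex `Hx` of the coset graph. -/
def cosetVert (G : Type*) [Group G] (H : Subgroup G) (x : G) : CosetVerts G H :=
  ⟨rightCoset' G H x, x, rfl⟩

/-- The coset graph `Cos(G,H,A)`: `Hx` is adjacent to `Hy` iff `H(yx⁻¹)H ⊆ A`. -/
def CosetGraph (G : Type*) [Group G] (H : Subgroup G) (A : Set G) :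
    SimpleGraph (CosetVerts G H) :=
  SimpleGraph.fromRel (fun X Y => ∃ x y : G, X = cosetVert G H x ∧ Y = cosetVert G H y ∧
    ∀ h k : G, h ∈ H → k ∈ H → h * (y * x⁻¹) * k ∈ A)

lemma image_rightCoset (G : Type*) [Group G] (H : Subgroup G) (g x : G) :
    (· * g) '' rightCoset' G H x = rightCoset' G H (x * g) := by
  ext s
  simp only [Set.mem_image, rightCoset', Set.mem_setOf_eq]
  constructor
  · rintro ⟨a, ha, rfl⟩
    have : a * g * (x * g)⁻¹ = a * x⁻¹ := by group
    rw [this]; exact ha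
  · intro hs
    refine ⟨s * g⁻¹, ?_, by simp⟩
    have : s * g⁻¹ * x⁻¹ = s * (x * g)⁻¹ := by group
    rw [this]; exact hs

/-- Right multiplication by `g` on vertices (underlying function). -/
def rhoFun (G : Type*) [Group G] (H : Subgroup G) (g : G) :
    CosetVerts G H → CosetVerts G H :=
  fun S => ⟨(· * g) '' S.1, by
    obtain ⟨x, hx⟩ := S.2
    exact ⟨x * g, by rw [hx, image_rightCoset]⟩⟩

lemma rhoFun_cosetVert (G : Type*) [Group G] (H : Subgroup G) (g x : G) :
    rhoFun G H g (cosetVert G H x) = cosetVert G H (x * g) := by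
  apply Subtype.ext
  exact image_rightCoset G H g x

lemma rhoFun_rhoFun (G : Type*) [Group G] (H : Subgroup G) (g g' : G)
    (S : CosetVerts G H) : rhoFun G H g' (rhoFun G H g S) = rhoFun G H (g * g') S := by
  apply Subtype.ext
  show (· * g') '' ((· * g) '' S.1) = (· * (g * g')) '' S.1
  rw [Set.image_image]
  simp [mul_assoc]

/-- Right multiplication by `g` as a permutation of the vertices. -/
def rho (G : Type*) [Group G] (H : Subgroup G) (g : G) : Equiv.Perm (CosetVerts G H) where
  toFun := rhoFun G H g
  invFun := rhoFun G H g⁻¹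
  left_inv := fun S => by rw [rhoFun_rhoFun]; simp [rhoFun]; rfl
  right_inv := fun S => by rw [rhoFun_rhoFun]; simp [rhoFun]; rfl

lemma rho_cosetVert (G : Type*) [Group G] (H : Subgroup G) (g x : G) :
    rho G H g (cosetVert G H x) = cosetVert G H (x * g) :=
  rhoFun_cosetVert G H g x

@[simp] lemma rho_inv_rho (G : Type*) [Group G] (H : Subgroup G) (g : G)
    (S : CosetVerts G H) : rho G H g⁻¹ (rho G H g S) = S := by
  show rhoFun G H g⁻¹ (rhoFun G H g S) = S
  rw [rhoFun_rhoFun]; apply Subtype.ext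
  show (· * (g * g⁻¹)) '' S.1 = S.1
  simp

@[simp] lemma rho_rho_inv (G : Type*) [Group G] (H : Subgroup G) (g : G)
    (S : CosetVerts G H) : rho G H g (rho G H g⁻¹ S) = S := by
  show rhoFun G H g (rhoFun G H g⁻¹ S) = S
  rw [rhoFun_rhoFun]; apply Subtype.ext
  show (· * (g⁻¹ * g)) '' S.1 = S.1
  simp

lemma rel_rho {G : Type*} [Group G] {H : Subgroup G} {A : Set G} (g : G)
    {X Y : CosetVerts G H}
    (h : ∃ x y : G, X = cosetVert G H x ∧ Y = cosetVert G H y ∧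
      ∀ h k : G, h ∈ H → k ∈ H → h * (y * x⁻¹) * k ∈ A) :
    ∃ x y : G, rho G H g X = cosetVert G H x ∧ rho G H g Y = cosetVert G H y ∧
      ∀ h k : G, h ∈ H → k ∈ H → h * (y * x⁻¹) * k ∈ A := by
  obtain ⟨x, y, hX, hY, hA⟩ := h
  refine ⟨x * g, y * g, by rw [hX, rho_cosetVert], by rw [hY, rho_cosetVert], ?_⟩
  intro h k hh hk
  have : y * g * (x * g)⁻¹ = y * x⁻¹ := by group
  rw [this]; exact hA h k hh hk

lemma rho_isGraphAut (G : Type*) [Group G] (H : Subgroup G) (A : Set G) (g : G) :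
    IsGraphAut (CosetGraph G H A) (rho G H g) := by
  intro u v
  simp only [CosetGraph, SimpleGraph.fromRel_adj]
  constructor
  · rintro ⟨hne, h⟩
    refine ⟨fun he => hne (by rw [he]), ?_⟩
    rcases h with h | h
    · left
      have := rel_rho (G := G) (H := H) (A := A) g⁻¹ h
      simpa using this
    · right
      have := rel_rho (G := G) (H := H) (A := A) g⁻¹ h
      simpa using this
  · rintro ⟨hne, h⟩
    refine ⟨fun he => hne ((rho G H g).injective he), ?_⟩
    rcases h with h | h
    · exact Or.inl (rel_rho g h)
    · exact Or.inr (rel_rho g h)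

lemma isGraphAut_trans {V : Type*} {Γ : SimpleGraph V} {σ τ : Equiv.Perm V}
    (hσ : IsGraphAut Γ σ) (hτ : IsGraphAut Γ τ) : IsGraphAut Γ (σ.trans τ) := by
  intro u v
  simp only [Equiv.trans_apply]
  rw [hτ, hσ]

theorem statement_5 (G : Type*) [Group G] [Finite G] (H : Subgroup G) (A : Set G)
    (hAinv : ∀ a ∈ A, a⁻¹ ∈ A)
    (hHAH : ∀ h ∈ H, ∀ a ∈ A, ∀ k ∈ H, h * a * k ∈ A)
    (B : Set G) (hBA : B ⊆ A)
    (hfix : ∀ σ : Equiv.Perm (CosetVerts G H), IsGraphAut (CosetGraph G H A) σ →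
      σ (cosetVert G H 1) = cosetVert G H 1 →
      ∀ b ∈ B, σ (cosetVert G H b) = cosetVert G H b) :
    ∀ σ : Equiv.Perm (CosetVerts G H), IsGraphAut (CosetGraph G H A) σ →
      σ (cosetVert G H 1) = cosetVert G H 1 →
      ∀ x ∈ Subgroup.closure B, σ (cosetVert G H x) = cosetVert G H x := by
  -- The key predicate
  set P : G → Prop := fun x => ∀ σ : Equiv.Perm (CosetVerts G H),
    IsGraphAut (CosetGraph G H A) σ → σ (cosetVert G H 1) = cosetVert G H 1 →
    σ (cosetVert G H x) = cosetVert G H x with hP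
  have hone : P 1 := fun σ _ h1 => h1
  have hmul : ∀ x y, P x → P y → P (x * y) := by
    intro x y hx hy σ hσ h1
    -- conjugate σ by right multiplication by y
    set τ : Equiv.Perm (CosetVerts G H) := (rho G H y).trans (σ.trans (rho G H y⁻¹)) with hτ
    have hτaut : IsGraphAut (CosetGraph G H A) τ :=
      isGraphAut_trans (rho_isGraphAut G H A y)
        (isGraphAut_trans hσ (rho_isGraphAut G H A y⁻¹))
    have hτ1 : τ (cosetVert G H 1) = cosetVert G H 1 := by
      simp only [hτ, Equiv.trans_apply, rho_cosetVert, one_mul]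
      rw [hy σ hσ h1, rho_cosetVert, mul_inv_cancel]
    have := hx τ hτaut hτ1
    simp only [hτ, Equiv.trans_apply, rho_cosetVert] at this
    have := congrArg (rho G H y) this
    rw [rho_cosetVert] at this
    rw [rho_rho_inv] at this
    exact this
  have hpow : ∀ x n, P x → P (x ^ n) := by
    intro x n hx
    induction n with
    | zero => simpa using hone
    | succ n ih => rw [pow_succ]; exact hmul _ _ ih hx
  have hinv : ∀ x, P x → P x⁻¹ := by
    intro x hx
    have h1 : x ^ (orderOf x - 1) * x = 1 := by
      rw [← pow_succ, Nat.sub_add_cancel (Nat.one_le_iff_ne_zero.2 (orderOf_pos x).ne'),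
        pow_orderOf_eq_one]
    rw [inv_eq_of_mul_eq_one_left h1]
    exact hpow x _ hx
  intro σ hσ h1 x hxmem
  have : P x := by
    induction hxmem using Subgroup.closure_induction with
    | mem b hb => exact fun σ hσ h1 => hfix σ hσ h1 b hb
    | one => exact hone
    | mul a b _ _ ha hb => exact hmul a b ha hb
    | inv a _ ha => exact hinv a ha
  exact this σ hσ h1
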